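/- Fix x \in R^d and q \in (1/2,1). Let X, Y be random vectors in R^d such that F_q(X) contains a ball of radius R_min/2, both F_q(X) and F_q(Y) are contained in the ball of radius R_max + r centered at the origin, and \delta_q(X,Y) \le R_min/4. Then \|P_{F_q(X)}(x) - P_{F_q(Y)}(x)\|_2 \le 5 \sqrt{(\|x\|_2 + R_max + r)(R_max + r)/R_min} \cdot \delta_q(X,Y)^{1/2}. -/

import Mathlib

open MeasureTheory

/-- The CDF of a (law of a) real random variable. -/
noncomputable def rcdf (μ : Measure ℝ) (t : ℝ) : ℝ := (μ (Set.Iic t)).toReal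

/-- The `q`-quantile `Q_q = inf {t : P(X ≤ t) ≥ q}`. -/
noncomputable def quantile (μ : Measure ℝ) (q : ℝ) : ℝ := sInf {t | q ≤ rcdf μ t}

/-- The `q`-quantile of the marginal `⟨X, θ⟩` of a random vector with law `μ`. -/
noncomputable def dirQuantile {d : ℕ} (μ : Measure (EuclideanSpace ℝ (Fin d))) (q : ℝ)
    (θ : EuclideanSpace ℝ (Fin d)) : ℝ :=
  quantile (μ.map fun x => (inner ℝ x θ : ℝ)) q

/-- The `q`-floating body `F_q(X)`. -/
noncomputable def floatingBody {d : ℕ} (μ : Measure (EuclideanSpace ℝ (Fin d))) (q : ℝ) :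
    Set (EuclideanSpace ℝ (Fin d)) :=
  {x | ∀ θ : EuclideanSpace ℝ (Fin d), ‖θ‖ = 1 → (inner ℝ x θ : ℝ) ≤ dirQuantile μ q θ}

/-- The `q`-distance `δ_q(X,Y)`. -/
noncomputable def deltaQ {d : ℕ} (μ ν : Measure (EuclideanSpace ℝ (Fin d))) (q : ℝ) : ℝ :=
  ⨆ θ : Metric.sphere (0 : EuclideanSpace ℝ (Fin d)) 1,
    |dirQuantile μ q θ - dirQuantile ν q θ|

lemma aux_quantile_abs_bound {d : ℕ} (q : ℝ) (hq : q ∈ Set.Ioo (1 / 2 : ℝ) 1)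
    (μ : Measure (EuclideanSpace ℝ (Fin d))) [IsProbabilityMeasure μ] :
    ∃ M : ℝ, 0 ≤ M ∧ ∀ θ : EuclideanSpace ℝ (Fin d), ‖θ‖ = 1 → |dirQuantile μ q θ| ≤ M := by
  -- find a ball of measure ≥ q
  have hU : (⋃ n : ℕ, Metric.closedBall (0 : EuclideanSpace ℝ (Fin d)) n) = Set.univ := by
    apply Set.eq_univ_of_forall
    intro y
    exact Set.mem_iUnion.2 ⟨⌈‖y‖⌉₊, by simpa [Metric.mem_closedBall, dist_eq_norm] using Nat.le_ceil ‖y‖⟩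
  have hmono : Monotone fun n : ℕ => Metric.closedBall (0 : EuclideanSpace ℝ (Fin d)) n := by
    intro m n hmn
    exact Metric.closedBall_subset_closedBall (by exact_mod_cast hmn)
  have hten := tendsto_measure_iUnion_atTop (μ := μ) hmono
  rw [hU, measure_univ] at hten
  have hlt : ENNReal.ofReal q < 1 := by
    rw [← ENNReal.ofReal_one]
    exact ENNReal.ofReal_lt_ofReal_iff_of_nonneg (by linarith [hq.1]) |>.2 hq.2
  obtain ⟨n, hn⟩ := (hten.eventually (lt_mem_nhds hlt)).exists
  set M : ℝ := (n : ℝ) with hM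
  have hM0 : 0 ≤ M := Nat.cast_nonneg n
  have hnq : ENNReal.ofReal q ≤ μ (Metric.closedBall 0 M) := le_of_lt hn
  refine ⟨M + 1, by linarith, ?_⟩
  intro θ hθ
  have hf : Measurable fun x : EuclideanSpace ℝ (Fin d) => (inner ℝ x θ : ℝ) :=
    (continuous_id.inner continuous_const).measurable
  have hrcdf : ∀ t : ℝ, rcdf (μ.map fun x => (inner ℝ x θ : ℝ)) t
      = (μ {x | (inner ℝ x θ : ℝ) ≤ t}).toReal := by
    intro t
    rw [rcdf, Measure.map_apply hf measurableSet_Iic]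
    rfl
  set S := {t : ℝ | q ≤ rcdf (μ.map fun x => (inner ℝ x θ : ℝ)) t} with hS
  have hMS : M ∈ S := by
    rw [Set.mem_setOf_eq, hrcdf]
    have hsub : Metric.closedBall (0 : EuclideanSpace ℝ (Fin d)) M ⊆ {x | (inner ℝ x θ : ℝ) ≤ M} := by
      intro y hy
      have h1 : |(inner ℝ y θ : ℝ)| ≤ ‖y‖ * ‖θ‖ := abs_real_inner_le_norm y θ
      have h2 : ‖y‖ ≤ M := by simpa [Metric.mem_closedBall, dist_eq_norm] using hy
      rw [hθ, mul_one] at h1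
      exact le_trans (le_abs_self _) (h1.trans h2)
    have : ENNReal.ofReal q ≤ μ {x | (inner ℝ x θ : ℝ) ≤ M} := hnq.trans (measure_mono hsub)
    exact (ENNReal.ofReal_le_iff_le_toReal (measure_ne_top μ _)).1 this
  have hlb : ∀ t ∈ S, -(M + 1) ≤ t := by
    intro t ht
    by_contra hcon
    push_neg at hcon
    have ht' : q ≤ (μ {x | (inner ℝ x θ : ℝ) ≤ t}).toReal := by
      rw [Set.mem_setOf_eq, hrcdf] at ht; exact ht
    have hsub : {x : EuclideanSpace ℝ (Fin d) | (inner ℝ x θ : ℝ) ≤ t}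
        ⊆ (Metric.closedBall (0 : EuclideanSpace ℝ (Fin d)) M)ᶜ := by
      intro y hy
      simp only [Set.mem_compl_iff, Metric.mem_closedBall, dist_eq_norm, sub_zero, not_le]
      have h1 : |(inner ℝ y θ : ℝ)| ≤ ‖y‖ * ‖θ‖ := abs_real_inner_le_norm y θ
      rw [hθ, mul_one] at h1
      have h2 : (inner ℝ y θ : ℝ) ≤ t := hy
      have h1' := (abs_le.1 h1).1
      linarith
    have hcompl : μ ((Metric.closedBall (0 : EuclideanSpace ℝ (Fin d)) M)ᶜ)
        = 1 - μ (Metric.closedBall (0 : EuclideanSpace ℝ (Fin d)) M) := by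
      rw [measure_compl measurableSet_closedBall (measure_ne_top μ _), measure_univ]
    have hle : μ {x | (inner ℝ x θ : ℝ) ≤ t} ≤ 1 - ENNReal.ofReal q := by
      refine (measure_mono hsub).trans ?_
      rw [hcompl]
      exact tsub_le_tsub_left hnq 1
    have : (μ {x | (inner ℝ x θ : ℝ) ≤ t}).toReal ≤ 1 - q := by
      have := ENNReal.toReal_mono (by finiteness) hle
      rw [ENNReal.toReal_sub_of_le (le_of_lt hlt) (by norm_num),
        ENNReal.toReal_one, ENNReal.toReal_ofReal (by linarith [hq.1])] at this
      exact this
    linarith [hq.1, ht', this]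
  have hSne : S.Nonempty := ⟨M, hMS⟩
  have hbdd : BddBelow S := ⟨-(M + 1), hlb⟩
  have h1 : dirQuantile μ q θ ≤ M := csInf_le hbdd hMS
  have h2 : -(M + 1) ≤ dirQuantile μ q θ := le_csInf hSne hlb
  rw [abs_le]
  constructor <;> linarith

lemma aux_var_ineq {E : Type*} [NormedAddCommGroup E] [InnerProductSpace ℝ E]
    {K : Set E} (hK : Convex ℝ K) {x p z : E} (hp : p ∈ K)
    (hmin : ∀ w ∈ K, ‖p - x‖ ≤ ‖w - x‖) (hz : z ∈ K) :
    (inner ℝ (x - p) (z - p) : ℝ) ≤ 0 := by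
  by_contra hcon
  push_neg at hcon
  set c : ℝ := inner ℝ (x - p) (z - p) with hc
  have hzp : (0 : ℝ) < ‖z - p‖ ^ 2 := by
    rcases eq_or_ne z p with h | h
    · rw [h] at hc; simp [hc] at hcon
    · have h0 : z - p ≠ 0 := sub_ne_zero_of_ne h
      have : 0 < ‖z - p‖ := norm_pos_iff.2 h0
      positivity
  set s : ℝ := min 1 (c / ‖z - p‖ ^ 2) with hs
  have hs0 : 0 < s := lt_min one_pos (div_pos hcon hzp)
  have hs1 : s ≤ 1 := min_le_left _ _
  have hsle : s * ‖z - p‖ ^ 2 ≤ c := by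
    rw [← le_div_iff₀ hzp]
    exact min_le_right _ _
  have hw : p + s • (z - p) ∈ K := hK.add_smul_sub_mem hp hz ⟨le_of_lt hs0, hs1⟩
  have h2 := hmin _ hw
  have hexp : ‖p + s • (z - p) - x‖ ^ 2 = ‖p - x‖ ^ 2 - 2 * (s * c) + s ^ 2 * ‖z - p‖ ^ 2 := by
    have heq : p + s • (z - p) - x = (p - x) + s • (z - p) := by abel
    rw [heq, norm_add_sq_real, real_inner_smul_right, norm_smul, Real.norm_eq_abs,
      abs_of_pos hs0, mul_pow]
    have : (inner ℝ (p - x) (z - p) : ℝ) = -c := by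
      rw [hc, ← inner_neg_left, neg_sub]
    rw [this]; ring
  have hsq : ‖p - x‖ ^ 2 ≤ ‖p + s • (z - p) - x‖ ^ 2 :=
    pow_le_pow_left₀ (norm_nonneg _) h2 2
  rw [hexp] at hsq
  nlinarith [mul_le_mul_of_nonneg_left hsle (le_of_lt hs0), mul_pos hs0 hcon]

lemma aux_floatingBody_convex {d : ℕ} (μ : Measure (EuclideanSpace ℝ (Fin d))) (q : ℝ) :
    Convex ℝ (floatingBody μ q) := by
  intro u hu v hv s t hs ht hst θ hθ
  have h1 := hu θ hθ
  have h2 := hv θ hθ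
  have : (inner ℝ (s • u + t • v) θ : ℝ) = s * inner ℝ u θ + t * inner ℝ v θ := by
    rw [inner_add_left, real_inner_smul_left, real_inner_smul_left]
  rw [this]
  calc s * inner ℝ u θ + t * inner ℝ v θ
      ≤ s * dirQuantile μ q θ + t * dirQuantile μ q θ :=
        add_le_add (mul_le_mul_of_nonneg_left h1 hs) (mul_le_mul_of_nonneg_left h2 ht)
    _ = (s + t) * dirQuantile μ q θ := by ring
    _ = dirQuantile μ q θ := by rw [hst, one_mul]

lemma aux_deltaQ_bound {d : ℕ} (q : ℝ) (hq : q ∈ Set.Ioo (1 / 2 : ℝ) 1)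
    (μ ν : Measure (EuclideanSpace ℝ (Fin d))) [IsProbabilityMeasure μ] [IsProbabilityMeasure ν]
    (θ : EuclideanSpace ℝ (Fin d)) (hθ : ‖θ‖ = 1) :
    |dirQuantile μ q θ - dirQuantile ν q θ| ≤ deltaQ μ ν q := by
  obtain ⟨M₁, hM₁0, hM₁⟩ := aux_quantile_abs_bound q hq μ
  obtain ⟨M₂, hM₂0, hM₂⟩ := aux_quantile_abs_bound q hq ν
  have hbdd : BddAbove (Set.range fun θ' : Metric.sphere (0 : EuclideanSpace ℝ (Fin d)) 1 =>
      |dirQuantile μ q θ' - dirQuantile ν q θ'|) := by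
    refine ⟨M₁ + M₂, ?_⟩
    rintro y ⟨θ', rfl⟩
    have hθ' : ‖(θ' : EuclideanSpace ℝ (Fin d))‖ = 1 := by
      have := θ'.2
      rwa [Metric.mem_sphere, dist_eq_norm, sub_zero] at this
    calc |dirQuantile μ q θ' - dirQuantile ν q θ'|
        ≤ |dirQuantile μ q θ'| + |dirQuantile ν q θ'| := abs_sub _ _
      _ ≤ M₁ + M₂ := add_le_add (hM₁ _ hθ') (hM₂ _ hθ')
  have hmem : θ ∈ Metric.sphere (0 : EuclideanSpace ℝ (Fin d)) 1 := by
    rw [Metric.mem_sphere, dist_eq_norm, sub_zero]; exact hθ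
  exact le_ciSup hbdd (⟨θ, hmem⟩ : Metric.sphere (0 : EuclideanSpace ℝ (Fin d)) 1)

set_option maxHeartbeats 1000000 in
/-- 1/2-Hölder continuity of the projection onto the floating body: under the stated
containment conditions and `δ_q(X,Y) ≤ R_min/4`,
`‖P_{F_q(X)}(x) - P_{F_q(Y)}(x)‖ ≤ 5 √((‖x‖ + R_max + r)(R_max + r)/R_min) ⋅ δ_q(X,Y)^{1/2}`. -/
theorem stmt_14 {d : ℕ} (q Rmin Rmax r : ℝ) (hq : q ∈ Set.Ioo (1 / 2 : ℝ) 1)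
    (hRmin : 0 < Rmin) (hRmax : 0 < Rmax) (hr : 0 < r)
    (μ ν : Measure (EuclideanSpace ℝ (Fin d))) [IsProbabilityMeasure μ] [IsProbabilityMeasure ν]
    (hball : ∃ a, Metric.closedBall a (Rmin / 2) ⊆ floatingBody μ q)
    (hcontX : floatingBody μ q ⊆ Metric.closedBall 0 (Rmax + r))
    (hcontY : floatingBody ν q ⊆ Metric.closedBall 0 (Rmax + r))
    (hδ : deltaQ μ ν q ≤ Rmin / 4)
    (x p₁ p₂ : EuclideanSpace ℝ (Fin d))
    (hp₁ : p₁ ∈ floatingBody μ q ∧ ∀ z ∈ floatingBody μ q, ‖p₁ - x‖ ≤ ‖z - x‖)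
    (hp₂ : p₂ ∈ floatingBody ν q ∧ ∀ z ∈ floatingBody ν q, ‖p₂ - x‖ ≤ ‖z - x‖) :
    ‖p₁ - p₂‖ ≤
      5 * Real.sqrt ((‖x‖ + Rmax + r) * (Rmax + r) / Rmin) * Real.sqrt (deltaQ μ ν q) := by
  rcases Nat.eq_zero_or_pos d with hd | hd
  · subst hd
    have hpp : p₁ = p₂ := Subsingleton.elim _ _
    rw [hpp, sub_self, norm_zero]
    positivity
  -- setup
  set δ : ℝ := deltaQ μ ν q with hδdef
  set R : ℝ := Rmax + r with hRdef
  have hR0 : 0 < R := by positivity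
  obtain ⟨a, ha⟩ := hball
  have haK : a ∈ floatingBody μ q := ha (Metric.mem_closedBall_self (by linarith))
  have key : ∀ θ : EuclideanSpace ℝ (Fin d), ‖θ‖ = 1 →
      |dirQuantile μ q θ - dirQuantile ν q θ| ≤ δ :=
    fun θ hθ => aux_deltaQ_bound q hq μ ν θ hθ
  have hδ0 : 0 ≤ δ := by
    obtain ⟨i⟩ := Fin.pos_iff_nonempty.1 hd
    have hθ : ‖(EuclideanSpace.single i (1 : ℝ))‖ = 1 := by
      rw [EuclideanSpace.norm_single]; norm_num
    exact le_trans (abs_nonneg _) (key _ hθ)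
  have haθ : ∀ θ : EuclideanSpace ℝ (Fin d), ‖θ‖ = 1 →
      (inner ℝ a θ : ℝ) + Rmin / 2 ≤ dirQuantile μ q θ := by
    intro θ hθ
    have hmem : a + (Rmin / 2) • θ ∈ floatingBody μ q := by
      apply ha
      rw [Metric.mem_closedBall, dist_eq_norm, add_sub_cancel_left, norm_smul,
        Real.norm_eq_abs, hθ, mul_one, abs_of_pos (by linarith)]
    have h1 := hmem θ hθ
    rw [inner_add_left, real_inner_smul_left, real_inner_self_eq_norm_sq, hθ] at h1
    linarith
  set t : ℝ := 2 * δ / Rmin with htdef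
  have ht0 : 0 ≤ t := by positivity
  have ht1 : t ≤ 1 := by
    rw [htdef, div_le_one hRmin]; linarith
  have htR : t * Rmin = 2 * δ := by
    rw [htdef, div_mul_cancel₀]
    exact hRmin.ne'
  -- the shifted points
  have hz₂ : p₂ + t • (a - p₂) ∈ floatingBody μ q := by
    intro θ hθ
    have h1 := hp₂.1 θ hθ
    have h2 := haθ θ hθ
    have h3 := (abs_le.1 (key θ hθ)).1
    rw [inner_add_left, real_inner_smul_left, inner_sub_left]
    have hA : (inner ℝ p₂ θ : ℝ) ≤ dirQuantile μ q θ + δ := by linarith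
    have hB : (inner ℝ a θ : ℝ) ≤ dirQuantile μ q θ - Rmin / 2 := by linarith
    nlinarith [mul_le_mul_of_nonneg_left hA (by linarith : (0:ℝ) ≤ 1 - t),
      mul_le_mul_of_nonneg_left hB ht0, mul_nonneg ht0 hδ0]
  have hz₁ : p₁ + t • (a - p₁) ∈ floatingBody ν q := by
    intro θ hθ
    have h1 := hp₁.1 θ hθ
    have h2 := haθ θ hθ
    have h3 := (abs_le.1 (key θ hθ)).2
    rw [inner_add_left, real_inner_smul_left, inner_sub_left]
    have hA : (inner ℝ p₁ θ : ℝ) ≤ dirQuantile ν q θ + δ := by linarith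
    have hB : (inner ℝ a θ : ℝ) ≤ dirQuantile ν q θ + δ - Rmin / 2 := by linarith
    nlinarith [mul_le_mul_of_nonneg_left hA (by linarith : (0:ℝ) ≤ 1 - t),
      mul_le_mul_of_nonneg_left hB ht0, mul_nonneg ht0 hδ0]
  -- variational inequalities
  have hvar1 : (inner ℝ (x - p₁) ((p₂ + t • (a - p₂)) - p₁) : ℝ) ≤ 0 :=
    aux_var_ineq (aux_floatingBody_convex μ q) hp₁.1 hp₁.2 hz₂
  have hvar2 : (inner ℝ (x - p₂) ((p₁ + t • (a - p₁)) - p₂) : ℝ) ≤ 0 :=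
    aux_var_ineq (aux_floatingBody_convex ν q) hp₂.1 hp₂.2 hz₁
  -- norm bounds
  have hnormp₁ : ‖p₁‖ ≤ R := by
    have := hcontX hp₁.1; rwa [Metric.mem_closedBall, dist_eq_norm, sub_zero] at this
  have hnormp₂ : ‖p₂‖ ≤ R := by
    have := hcontY hp₂.1; rwa [Metric.mem_closedBall, dist_eq_norm, sub_zero] at this
  have hnorma : ‖a‖ ≤ R := by
    have := hcontX haK; rwa [Metric.mem_closedBall, dist_eq_norm, sub_zero] at this
  -- key squared estimate
  have hip1 : (inner ℝ (x - p₁) (p₂ - p₁) : ℝ) ≤ (‖x‖ + R) * (2 * R * t) := by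
    have hsplit : (inner ℝ (x - p₁) (p₂ - p₁) : ℝ)
        = inner ℝ (x - p₁) ((p₂ + t • (a - p₂)) - p₁) + inner ℝ (x - p₁) (-(t • (a - p₂))) := by
      rw [← inner_add_right]; congr 1; abel
    rw [hsplit]
    have hb : (inner ℝ (x - p₁) (-(t • (a - p₂))) : ℝ) ≤ ‖x - p₁‖ * ‖t • (a - p₂)‖ := by
      calc (inner ℝ (x - p₁) (-(t • (a - p₂))) : ℝ)
          ≤ ‖x - p₁‖ * ‖-(t • (a - p₂))‖ := real_inner_le_norm _ _
        _ = ‖x - p₁‖ * ‖t • (a - p₂)‖ := by rw [norm_neg]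
    have hn1 : ‖x - p₁‖ ≤ ‖x‖ + R := (norm_sub_le _ _).trans (by linarith)
    have hn2 : ‖t • (a - p₂)‖ ≤ 2 * R * t := by
      rw [norm_smul, Real.norm_eq_abs, abs_of_nonneg ht0]
      have h2R : ‖a - p₂‖ ≤ 2 * R := (norm_sub_le _ _).trans (by linarith)
      calc t * ‖a - p₂‖ ≤ t * (2 * R) := mul_le_mul_of_nonneg_left h2R ht0
        _ = 2 * R * t := by ring
    have := mul_le_mul hn1 hn2 (norm_nonneg _) (by positivity)
    linarith
  have hip2 : (inner ℝ (x - p₂) (p₁ - p₂) : ℝ) ≤ (‖x‖ + R) * (2 * R * t) := by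
    have hsplit : (inner ℝ (x - p₂) (p₁ - p₂) : ℝ)
        = inner ℝ (x - p₂) ((p₁ + t • (a - p₁)) - p₂) + inner ℝ (x - p₂) (-(t • (a - p₁))) := by
      rw [← inner_add_right]; congr 1; abel
    rw [hsplit]
    have hb : (inner ℝ (x - p₂) (-(t • (a - p₁))) : ℝ) ≤ ‖x - p₂‖ * ‖t • (a - p₁)‖ := by
      calc (inner ℝ (x - p₂) (-(t • (a - p₁))) : ℝ)
          ≤ ‖x - p₂‖ * ‖-(t • (a - p₁))‖ := real_inner_le_norm _ _
        _ = ‖x - p₂‖ * ‖t • (a - p₁)‖ := by rw [norm_neg]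
    have hn1 : ‖x - p₂‖ ≤ ‖x‖ + R := (norm_sub_le _ _).trans (by linarith)
    have hn2 : ‖t • (a - p₁)‖ ≤ 2 * R * t := by
      rw [norm_smul, Real.norm_eq_abs, abs_of_nonneg ht0]
      have h2R : ‖a - p₁‖ ≤ 2 * R := (norm_sub_le _ _).trans (by linarith)
      calc t * ‖a - p₁‖ ≤ t * (2 * R) := mul_le_mul_of_nonneg_left h2R ht0
        _ = 2 * R * t := by ring
    have := mul_le_mul hn1 hn2 (norm_nonneg _) (by positivity)
    linarith
  have hiden : (inner ℝ (x - p₁) (p₂ - p₁) : ℝ) + inner ℝ (x - p₂) (p₁ - p₂) = ‖p₁ - p₂‖ ^ 2 := by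
    rw [← real_inner_self_eq_norm_sq]
    simp only [inner_sub_left, inner_sub_right]
    rw [real_inner_comm p₂ p₁]
    ring
  have hsq : ‖p₁ - p₂‖ ^ 2 ≤ 2 * (‖x‖ + R) * (2 * R * t) := by
    rw [← hiden]; linarith
  -- conclude
  have hA0 : 0 ≤ (‖x‖ + Rmax + r) * (Rmax + r) / Rmin := by positivity
  have hfin : ‖p₁ - p₂‖ ^ 2 ≤ 25 * ((‖x‖ + Rmax + r) * (Rmax + r) / Rmin) * δ := by
    have hxR : 25 * ((‖x‖ + Rmax + r) * (Rmax + r) / Rmin) * δ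
        = 25 * ((‖x‖ + R) * R) * δ / Rmin := by rw [hRdef]; ring
    rw [hxR, le_div_iff₀ hRmin]
    have htmul : t * Rmin = 2 * δ := by rw [htdef]; field_simp
    calc ‖p₁ - p₂‖ ^ 2 * Rmin ≤ (2 * (‖x‖ + R) * (2 * R * t)) * Rmin := by
          nlinarith [sq_nonneg ‖p₁ - p₂‖]
      _ = 4 * (‖x‖ + R) * R * (t * Rmin) := by ring
      _ = 8 * ((‖x‖ + R) * R) * δ := by rw [htmul]; ring
      _ ≤ 25 * ((‖x‖ + R) * R) * δ := by
          have hnn : 0 ≤ (‖x‖ + R) * R * δ :=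
            mul_nonneg (mul_nonneg (by positivity) hR0.le) hδ0
          nlinarith [hnn]
  calc ‖p₁ - p₂‖ = Real.sqrt (‖p₁ - p₂‖ ^ 2) := (Real.sqrt_sq (norm_nonneg _)).symm
    _ ≤ Real.sqrt (25 * ((‖x‖ + Rmax + r) * (Rmax + r) / Rmin) * δ) := Real.sqrt_le_sqrt hfin
    _ = 5 * Real.sqrt ((‖x‖ + Rmax + r) * (Rmax + r) / Rmin) * Real.sqrt δ := by
        rw [Real.sqrt_mul (by positivity), Real.sqrt_mul (by norm_num : (0:ℝ) ≤ 25),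
          show (25 : ℝ) = 5 ^ 2 by norm_num, Real.sqrt_sq (by norm_num : (0:ℝ) ≤ 5)]
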